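/- Let ρ = Σᵢ aᵢ |ψᵢ⟩⟨ψᵢ| be a density operator written in an orthonormal eigendecomposition with weights aᵢ ≥ 0 summing to 1, and let H be a Hermitian operator with maximum eigenvalue C_q. Suppose ε₁, ε₂ are reals with 0 ≤ ε₁ < ε₂, Tr(ρH) ≥ C_q − ε₁, and suppose for every index i with ⟨ψᵢ|H|ψᵢ⟩ ≥ C_q − ε₁ and every j ≠ i, ⟨ψⱼ|H|ψⱼ⟩ ≤ C_q − ε₂. Then there exists an index i₁ with a_{i₁} ≥ 1 − ε₁/ε₂. -/

import Mathlib

open Matrix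

lemma aux_conj_mul_re (z : ℂ) : (star z * z).re = Complex.normSq z := by
  simp [Complex.star_def, Complex.normSq_apply, Complex.mul_re]

lemma aux_rayleigh {n : ℕ} (H : Matrix (Fin n) (Fin n) ℂ) (hH : H.IsHermitian) (Cq : ℝ)
    (hCq : ∀ i, hH.eigenvalues i ≤ Cq) (v : Fin n → ℂ) (hv : star v ⬝ᵥ v = 1) :
    (star v ⬝ᵥ (H *ᵥ v)).re ≤ Cq := by
  classical
  set U : Matrix (Fin n) (Fin n) ℂ := (hH.eigenvectorUnitary : Matrix (Fin n) (Fin n) ℂ) with hU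
  set w : Fin n → ℂ := star U *ᵥ v with hw
  have hUU : U * star U = 1 := (Matrix.mem_unitaryGroup_iff).mp hH.eigenvectorUnitary.2
  have hstarw : star w = star v ᵥ* U := by
    rw [hw, star_mulVec, star_eq_conjTranspose, conjTranspose_conjTranspose]
  have hkey : star v ⬝ᵥ (H *ᵥ v) =
      star w ⬝ᵥ (diagonal (RCLike.ofReal ∘ hH.eigenvalues) *ᵥ w) := by
    conv_lhs => rw [hH.spectral_theorem, Unitary.conjStarAlgAut_apply]
    rw [← mulVec_mulVec, ← mulVec_mulVec, dotProduct_mulVec (star v), ← hstarw, ← hU, ← hw,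
      dotProduct_mulVec (star w)]
  have hnorm : ∑ i, Complex.normSq (w i) = 1 := by
    have : star w ⬝ᵥ w = 1 := by
      rw [hstarw, dotProduct_mulVec, vecMul_vecMul, hUU, vecMul_one, hv]
    have h2 := congrArg Complex.re this
    rw [dotProduct, Complex.re_sum] at h2
    simpa [aux_conj_mul_re, Complex.normSq_apply] using h2
  rw [hkey, dotProduct, Complex.re_sum]
  have hterm : ∀ i, (star (w i) * (diagonal (RCLike.ofReal ∘ hH.eigenvalues) *ᵥ w) i).re
      = hH.eigenvalues i * Complex.normSq (w i) := by
    intro i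
    rw [mulVec_diagonal]
    have : star (w i) * ((RCLike.ofReal ∘ hH.eigenvalues) i * w i)
        = (hH.eigenvalues i : ℂ) * (star (w i) * w i) := by
      have h : (RCLike.ofReal ∘ hH.eigenvalues) i = (hH.eigenvalues i : ℂ) := rfl
      rw [h]; ring
    rw [this, Complex.re_ofReal_mul, aux_conj_mul_re]
  calc ∑ i, (star (w i) * (diagonal (RCLike.ofReal ∘ hH.eigenvalues) *ᵥ w) i).re
      = ∑ i, hH.eigenvalues i * Complex.normSq (w i) := Finset.sum_congr rfl fun i _ => hterm i
    _ ≤ ∑ i, Cq * Complex.normSq (w i) := by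
        apply Finset.sum_le_sum
        intro i _
        exact mul_le_mul_of_nonneg_right (hCq i) (Complex.normSq_nonneg _)
    _ = Cq := by rw [← Finset.mul_sum, hnorm, mul_one]

theorem stmt_5 {n : ℕ} (H ρ : Matrix (Fin n) (Fin n) ℂ)
    (hH : H.IsHermitian)
    (Cq : ℝ) (hCq : IsGreatest (Set.range hH.eigenvalues) Cq)
    (a : Fin n → ℝ) (ha : ∀ i, 0 ≤ a i) (hsum : ∑ i, a i = 1)
    (ψ : Fin n → (Fin n → ℂ))
    (horth : ∀ i j, star (ψ i) ⬝ᵥ ψ j = if i = j then 1 else 0)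
    (hρ : ρ = ∑ i, (a i : ℂ) • vecMulVec (ψ i) (star (ψ i)))
    (ε₁ ε₂ : ℝ) (hε₁ : 0 ≤ ε₁) (hε : ε₁ < ε₂)
    (htr : Cq - ε₁ ≤ ((ρ * H).trace).re)
    (hnd : ∀ i, Cq - ε₁ ≤ (star (ψ i) ⬝ᵥ (H *ᵥ ψ i)).re →
      ∀ j, j ≠ i → (star (ψ j) ⬝ᵥ (H *ᵥ ψ j)).re ≤ Cq - ε₂) :
    ∃ i₁, 1 - ε₁ / ε₂ ≤ a i₁ := by
  classical
  have hε₂ : 0 < ε₂ := lt_of_le_of_lt hε₁ hε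
  set x : Fin n → ℝ := fun i => (star (ψ i) ⬝ᵥ (H *ᵥ ψ i)).re with hx
  have hCq' : ∀ i, hH.eigenvalues i ≤ Cq := fun i => hCq.2 ⟨i, rfl⟩
  have hxle : ∀ i, x i ≤ Cq := fun i =>
    aux_rayleigh H hH Cq hCq' (ψ i) (by simpa using horth i i)
  -- trace computation
  have htrace : ((ρ * H).trace).re = ∑ i, a i * x i := by
    rw [hρ, Finset.sum_mul, trace_sum]
    have hterm : ∀ i, ((a i : ℂ) • vecMulVec (ψ i) (star (ψ i)) * H).trace
        = (a i : ℂ) * (star (ψ i) ⬝ᵥ (H *ᵥ ψ i)) := by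
      intro i
      rw [smul_mul_assoc, trace_smul, smul_eq_mul]
      congr 1
      rw [vecMulVec_eq Unit, Matrix.mul_assoc, ← replicateRow_vecMul, trace_replicateCol_mul_replicateRow,
        dotProduct_comm, ← dotProduct_mulVec]
    simp only [hterm, Complex.re_sum, Complex.re_ofReal_mul, hx]
  rw [htrace] at htr
  -- find a good index
  have hex : ∃ i, Cq - ε₁ ≤ x i := by
    by_contra hcon
    push_neg at hcon
    obtain ⟨i₀, hi₀⟩ : ∃ i₀, 0 < a i₀ := by
      by_contra hc
      push_neg at hc
      have : ∑ i, a i = 0 := Finset.sum_eq_zero fun i _ => le_antisymm (hc i) (ha i)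
      rw [hsum] at this; norm_num at this
    have : ∑ i, a i * x i < ∑ i, a i * (Cq - ε₁) := by
      apply Finset.sum_lt_sum
      · exact fun i _ => mul_le_mul_of_nonneg_left (hcon i).le (ha i)
      · exact ⟨i₀, Finset.mem_univ _, mul_lt_mul_of_pos_left (hcon i₀) hi₀⟩
    rw [← Finset.sum_mul, hsum, one_mul] at this
    linarith
  obtain ⟨i₁, hi₁⟩ := hex
  refine ⟨i₁, ?_⟩
  have hrest : ∀ j, j ≠ i₁ → x j ≤ Cq - ε₂ := hnd i₁ hi₁
  have hsplit : ∑ i, a i * x i = a i₁ * x i₁ + ∑ j ∈ Finset.univ.erase i₁, a j * x j :=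
    (Finset.add_sum_erase _ _ (Finset.mem_univ i₁)).symm
  have hrestsum : ∑ j ∈ Finset.univ.erase i₁, a j * x j
      ≤ ∑ j ∈ Finset.univ.erase i₁, a j * (Cq - ε₂) := by
    apply Finset.sum_le_sum
    intro j hj
    exact mul_le_mul_of_nonneg_left (hrest j (Finset.mem_erase.1 hj).1) (ha j)
  have hasum : ∑ j ∈ Finset.univ.erase i₁, a j = 1 - a i₁ := by
    have := Finset.add_sum_erase _ a (Finset.mem_univ i₁)
    rw [hsum] at this; linarith
  rw [← Finset.sum_mul, hasum] at hrestsum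
  have hbound : Cq - ε₁ ≤ a i₁ * Cq + (1 - a i₁) * (Cq - ε₂) := by
    have h1 : a i₁ * x i₁ ≤ a i₁ * Cq := mul_le_mul_of_nonneg_left (hxle i₁) (ha i₁)
    linarith [hsplit ▸ htr]
  have h2 : (1 - a i₁) * ε₂ ≤ ε₁ := by nlinarith
  have h3 : 1 - a i₁ ≤ ε₁ / ε₂ := (le_div_iff₀ hε₂).2 h2
  linarith
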